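/- Let W ≥ 0, E, Γ, δ₁, g_max, V ∈ ℝ with W ≤ max(g_max·V - c, 0) for some c ≥ 0, and suppose μ : [0,∞) → ℝ satisfies 0 ≤ μ(P) - μ(0) ≤ δ₁·P for all P ≥ 0 (δ₁ ≥ 0). If E < Γ - (ξ/η)·δ₁·g_max·V (with ξ, η > 0), then for every P > 0: W·μ(P) + (η/ξ)·(E - Γ)·P < W·μ(0). Hence the maximizer over P ∈ [0, P_max] of G(P) = W·μ(P) + (η/ξ)(E - Γ)·P is P = 0. -/

import Mathlib

theorem stmt_16
    (W E Γ δ₁ gmax V ξ η c Pmax : ℝ)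
    (hW0 : 0 ≤ W) (hc : 0 ≤ c) (hWle : W ≤ max (gmax * V - c) 0)
    (hgmax : 0 ≤ gmax) (hV : 0 ≤ V) (hδ₁ : 0 ≤ δ₁)
    (hξ : 0 < ξ) (hη : 0 < η)
    (μ : ℝ → ℝ)
    (hμ : ∀ P : ℝ, 0 ≤ P → 0 ≤ μ P - μ 0 ∧ μ P - μ 0 ≤ δ₁ * P)
    (hE : E < Γ - (ξ / η) * δ₁ * gmax * V) :
    (∀ P : ℝ, 0 < P → W * μ P + (η / ξ) * (E - Γ) * P < W * μ 0) ∧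
    (∀ P : ℝ, 0 ≤ P → P ≤ Pmax →
      W * μ P + (η / ξ) * (E - Γ) * P ≤ W * μ 0 + (η / ξ) * (E - Γ) * 0) := by
  have hWg : W ≤ gmax * V := by
    have h0 : (0:ℝ) ≤ gmax * V := mul_nonneg hgmax hV
    have : max (gmax * V - c) 0 ≤ gmax * V := max_le (by linarith) h0
    linarith
  have hkey : (η / ξ) * (E - Γ) < -(δ₁ * gmax * V) := by
    have h1 : E - Γ < -((ξ / η) * δ₁ * gmax * V) := by linarith
    have h2 : (η / ξ) * (E - Γ) < (η / ξ) * (-((ξ / η) * δ₁ * gmax * V)) := by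
      exact (mul_lt_mul_iff_right₀ (div_pos hη hξ)).mpr h1
    have h3 : (η / ξ) * ((ξ / η) * δ₁ * gmax * V) = δ₁ * gmax * V := by
      field_simp
    nlinarith [h2, h3]
  have hstrict : ∀ P : ℝ, 0 < P → W * μ P + (η / ξ) * (E - Γ) * P < W * μ 0 := by
    intro P hP
    obtain ⟨h1, h2⟩ := hμ P hP.le
    have hWmu : W * (μ P - μ 0) ≤ gmax * V * (δ₁ * P) := by
      calc W * (μ P - μ 0) ≤ W * (δ₁ * P) := by
            exact mul_le_mul_of_nonneg_left h2 hW0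
        _ ≤ gmax * V * (δ₁ * P) := by
            exact mul_le_mul_of_nonneg_right hWg (by positivity)
    have hlin : (η / ξ) * (E - Γ) * P < -(δ₁ * gmax * V) * P :=
      (mul_lt_mul_iff_left₀ hP).mpr hkey
    nlinarith [hWmu, hlin]
  refine ⟨hstrict, fun P hP hPmax => ?_⟩
  rcases eq_or_lt_of_le hP with h | h
  · simp [← h]
  · have := hstrict P h
    simp only [mul_zero]
    linarith
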